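/- Let n be a squarefree positive integer. The torsion subgroup of the group E_n(ℚ) of rational points of the elliptic curve E_n : y² = x³ − n²x consists exactly of the four points O (the point at infinity), (0, 0), (n, 0), and (−n, 0), and is isomorphic to ℤ/2ℤ ⊕ ℤ/2ℤ. -/

import Mathlib

/-- The elliptic curve `E_n : y² = x³ − n²x` as an affine Weierstrass curve over `ℚ`. -/
def congruentCurve (n : ℕ) : WeierstrassCurve.Affine ℚ :=
  { a₁ := 0, a₂ := 0, a₃ := 0, a₄ := -(n : ℚ) ^ 2, a₆ := 0 }

open WeierstrassCurve.Affine WeierstrassCurve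

private lemma no_rat_sq {p : ℕ} (hp : p.Prime) (r : ℚ) : r ^ 2 ≠ (p : ℚ) := by
  intro h
  have h2 : ((r : ℝ)) ^ 2 = (p : ℝ) := by exact_mod_cast congrArg (Rat.cast : ℚ → ℝ) h
  have hs : Real.sqrt p = |(r : ℝ)| := by
    rw [← h2, Real.sqrt_sq_eq_abs]
  exact hp.irrational_sqrt ⟨|r|, by rw [hs, Rat.cast_abs]⟩

private lemma den_odd_of_vnonneg (r : ℚ) (h : 0 ≤ padicValRat 2 r) : ¬ (2 ∣ r.den) := by
  intro hdvd
  have hr0 : r ≠ 0 := by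
    intro h0; rw [h0] at hdvd; simp [Rat.den_ofNat] at hdvd
  have hnum : ¬ ((2:ℤ) ∣ r.num) := by
    intro hd
    have hred := r.reduced
    have h2 : 2 ∣ r.num.natAbs := Int.natAbs_dvd_natAbs.mpr (by simpa using hd)
    have := Nat.Coprime.eq_one_of_dvd (hred.coprime_dvd_left h2) hdvd
    norm_num at this
  have hv : padicValRat 2 r = padicValInt 2 r.num - padicValNat 2 r.den := padicValRat_def 2 r
  have h1 : padicValInt 2 r.num = 0 := padicValInt.eq_zero_of_not_dvd hnum
  haveI : Fact (Nat.Prime 2) := ⟨Nat.prime_two⟩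
  have h2 : 1 ≤ padicValNat 2 r.den :=
    one_le_padicValNat_of_dvd r.den_nz hdvd
  omega

noncomputable def ptx {W : WeierstrassCurve.Affine ℚ} : W.Point → ℚ
  | .zero => 0
  | .some x _ _ => x

@[simp] lemma ptx_some {W : WeierstrassCurve.Affine ℚ} {x y : ℚ} (h : W.Nonsingular x y) :
    ptx (WeierstrassCurve.Affine.Point.some _ _ h) = x := rfl

private lemma zmod8_sq (a b c : ZMod 8) (h : b^2 + c^2 = 2*a^2) :
    a^2 - b^2 = 0 ∨ a^2 - b^2 = 4 := by revert h; revert a b c; decide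

private lemma cong_lemma (n : ℕ) (hsf : Squarefree n) (u v w : ℚ)
    (hu : u ≠ 0) (hv : v ≠ 0) (hw : w ≠ 0)
    (h1 : u^2 - v^2 = (n:ℚ)) (h2 : w^2 - u^2 = (n:ℚ)) :
    padicValRat 2 (u^2) < 0 := by
  haveI : Fact (Nat.Prime 2) := ⟨Nat.prime_two⟩
  by_contra hcon
  push_neg at hcon
  have hn0 : n ≠ 0 := hsf.ne_zero
  have hv2 : v^2 ≠ 0 := pow_ne_zero 2 hv
  have hw2 : w^2 ≠ 0 := pow_ne_zero 2 hw
  have hvu : 0 ≤ padicValRat 2 u := by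
    have := padicValRat.pow (p := 2) u (k := 2)
    omega
  have hvnn : 0 ≤ padicValRat 2 (n:ℚ) := by
    rw [padicValRat.of_nat]; positivity
  have hvv : 0 ≤ padicValRat 2 v := by
    have hmin : min (padicValRat 2 (u^2)) (padicValRat 2 (-(n:ℚ))) ≤
        padicValRat 2 (u^2 + -(n:ℚ)) := by
      apply padicValRat.min_le_padicValRat_add
      intro hz; apply hv2; linarith [h1]
    have hval : padicValRat 2 (u^2 + -(n:ℚ)) = padicValRat 2 (v^2) := by
      congr 1; linarith [h1]
    rw [padicValRat.neg, hval, padicValRat.pow (p := 2) v (k := 2)] at hmin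
    have := le_min hcon hvnn
    omega
  have hvw : 0 ≤ padicValRat 2 w := by
    have hmin : min (padicValRat 2 (u^2)) (padicValRat 2 ((n:ℚ))) ≤
        padicValRat 2 (u^2 + (n:ℚ)) := by
      apply padicValRat.min_le_padicValRat_add
      intro hz; apply hw2; linarith [h2]
    have hval : padicValRat 2 (u^2 + (n:ℚ)) = padicValRat 2 (w^2) := by
      congr 1; linarith [h2]
    rw [hval, padicValRat.pow (p := 2) w (k := 2)] at hmin
    have := le_min hcon hvnn
    omega
  have hdu := den_odd_of_vnonneg u hvu
  have hdv := den_odd_of_vnonneg v hvv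
  have hdw := den_odd_of_vnonneg w hvw
  set A : ℤ := u.num * v.den * w.den with hA
  set B : ℤ := v.num * u.den * w.den with hB
  set C : ℤ := w.num * u.den * v.den with hC
  set D : ℕ := u.den * v.den * w.den with hD
  have hDodd : Odd D :=
    ((Nat.odd_iff.mpr (Nat.two_dvd_ne_zero.mp hdu)).mul
      (Nat.odd_iff.mpr (Nat.two_dvd_ne_zero.mp hdv))).mul
        (Nat.odd_iff.mpr (Nat.two_dvd_ne_zero.mp hdw))
  have hud : (u.den : ℚ) ≠ 0 := Nat.cast_ne_zero.mpr u.den_nz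
  have hvd : (v.den : ℚ) ≠ 0 := Nat.cast_ne_zero.mpr v.den_nz
  have hwd : (w.den : ℚ) ≠ 0 := Nat.cast_ne_zero.mpr w.den_nz
  have hnu : (u.num : ℚ) = u * u.den := by
    exact_mod_cast (Rat.num_div_den u) ▸ (div_mul_cancel₀ (u.num:ℚ) hud).symm
  have hnv : (v.num : ℚ) = v * v.den := by
    exact_mod_cast (Rat.num_div_den v) ▸ (div_mul_cancel₀ (v.num:ℚ) hvd).symm
  have hnw : (w.num : ℚ) = w * w.den := by
    exact_mod_cast (Rat.num_div_den w) ▸ (div_mul_cancel₀ (w.num:ℚ) hwd).symm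
  have hAq : (A : ℚ) = u * D := by
    rw [hA, hD]; push_cast; rw [hnu]; ring
  have hBq : (B : ℚ) = v * D := by
    rw [hB, hD]; push_cast; rw [hnv]; ring
  have hCq : (C : ℚ) = w * D := by
    rw [hC, hD]; push_cast; rw [hnw]; ring
  have hint1 : A^2 - B^2 = (n : ℤ) * (D:ℤ)^2 := by
    have hq : (A:ℚ)^2 - (B:ℚ)^2 = (n:ℚ) * (D:ℚ)^2 := by rw [hAq, hBq]; linear_combination ((D:ℚ))^2 * h1
    exact_mod_cast hq
  have hint2 : B^2 + C^2 = 2 * A^2 := by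
    have hq : (B:ℚ)^2 + (C:ℚ)^2 = 2 * (A:ℚ)^2 := by
      rw [hAq, hBq, hCq]; linear_combination ((D:ℚ))^2 * (h2 - h1)
    exact_mod_cast hq
  -- pass to ZMod 8
  have h8 : ((A : ZMod 8))^2 - ((B : ZMod 8))^2 = (n : ZMod 8) * ((D : ZMod 8))^2 := by
    have := congrArg (Int.cast : ℤ → ZMod 8) hint1
    push_cast at this
    exact_mod_cast this
  have h8' : ((B : ZMod 8))^2 + ((C : ZMod 8))^2 = 2 * ((A : ZMod 8))^2 := by
    have := congrArg (Int.cast : ℤ → ZMod 8) hint2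
    push_cast at this
    simpa only [Int.cast_add, Int.cast_mul, Int.cast_pow, Int.cast_ofNat] using this
  have hD8 : ((D : ZMod 8))^2 = 1 := by
    obtain ⟨k, hk⟩ := hDodd
    have : (D : ZMod 8) = 2 * (k : ZMod 8) + 1 := by
      rw [hk]; push_cast; ring
    rw [this]; ring_nf
    generalize (k : ZMod 8) = t
    revert t; decide
  rw [hD8, mul_one] at h8
  have hn8 : (n : ZMod 8) = 0 ∨ (n : ZMod 8) = 4 := by
    rw [← h8]; exact zmod8_sq _ _ _ h8'
  have h4 : (n : ZMod 4) = 0 := by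
    rcases hn8 with h | h
    · have := congrArg (ZMod.castHom (by norm_num : (4:ℕ) ∣ 8) (ZMod 4)) h
      rwa [map_natCast, map_zero] at this
    · have := congrArg (ZMod.castHom (by norm_num : (4:ℕ) ∣ 8) (ZMod 4)) h
      rw [map_natCast] at this
      rw [this]; decide
  have hdvd : (4:ℕ) ∣ n := (ZMod.natCast_eq_zero_iff n 4).mp h4
  have := hsf 2 (by omega)
  norm_num at this

namespace CongrAux

variable {n : ℕ}

lemma eqn_iff (x y : ℚ) : (congruentCurve n).Equation x y ↔ y^2 = x^3 - (n:ℚ)^2 * x := by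
  rw [WeierstrassCurve.Affine.equation_iff]
  simp only [congruentCurve]
  constructor <;> intro h <;> linarith

lemma delta_ne (hn : n ≠ 0) : (congruentCurve n).Δ ≠ 0 := by
  have : (congruentCurve n).Δ = 64 * (n:ℚ)^6 := by
    simp [congruentCurve, WeierstrassCurve.Δ, WeierstrassCurve.b₂, WeierstrassCurve.b₄,
      WeierstrassCurve.b₆, WeierstrassCurve.b₈]
    ring
  rw [this]
  have : (n:ℚ) ≠ 0 := Nat.cast_ne_zero.mpr hn
  positivity

lemma ns_of_eqn (hn : n ≠ 0) {x y : ℚ} (h : (congruentCurve n).Equation x y) :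
    (congruentCurve n).Nonsingular x y :=
  ((congruentCurve n).equation_iff_nonsingular_of_Δ_ne_zero (delta_ne hn)).mp h

lemma negY_eq (x y : ℚ) : (congruentCurve n).negY x y = -y := by
  simp [congruentCurve, WeierstrassCurve.Affine.negY]

lemma negY_ne {x y : ℚ} (hy : y ≠ 0) : y ≠ (congruentCurve n).negY x y := by
  rw [negY_eq]; intro h; apply hy; linarith

lemma slope_self {x y : ℚ} (hy : y ≠ 0) :
    (congruentCurve n).slope x x y y = (3*x^2 - (n:ℚ)^2) / (2*y) := by
  rw [WeierstrassCurve.Affine.slope_of_Y_ne rfl (negY_ne hy)]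
  rw [negY_eq]
  simp only [congruentCurve]
  ring_nf

lemma doubleX_eq {x y : ℚ} (hE : y^2 = x^3 - (n:ℚ)^2 * x) (hy : y ≠ 0) :
    (congruentCurve n).addX x x ((congruentCurve n).slope x x y y) =
      ((x^2 + (n:ℚ)^2) / (2*y))^2 := by
  rw [slope_self hy]
  simp only [WeierstrassCurve.Affine.addX, congruentCurve]
  field_simp
  ring_nf
  linear_combination (-8*x) * hE

lemma doubleX_sub (hn : n ≠ 0) {x y : ℚ} (hE : y^2 = x^3 - (n:ℚ)^2 * x) (hy : y ≠ 0) :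
    (congruentCurve n).addX x x ((congruentCurve n).slope x x y y) - (n:ℚ) =
      ((x^2 - 2*(n:ℚ)*x - (n:ℚ)^2) / (2*y))^2 := by
  rw [slope_self hy]
  simp only [WeierstrassCurve.Affine.addX, congruentCurve]
  field_simp
  ring_nf
  linear_combination (-8*x - 4*(n:ℚ)) * hE

lemma doubleX_add (hn : n ≠ 0) {x y : ℚ} (hE : y^2 = x^3 - (n:ℚ)^2 * x) (hy : y ≠ 0) :
    (congruentCurve n).addX x x ((congruentCurve n).slope x x y y) + (n:ℚ) =
      ((x^2 + 2*(n:ℚ)*x - (n:ℚ)^2) / (2*y))^2 := by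
  rw [slope_self hy]
  simp only [WeierstrassCurve.Affine.addX, congruentCurve]
  field_simp
  ring_nf
  linear_combination (-8*x + 4*(n:ℚ)) * hE

lemma double_some {x y : ℚ} (h : (congruentCurve n).Nonsingular x y) (hy : y ≠ 0) :
    WeierstrassCurve.Affine.Point.some _ _ h + WeierstrassCurve.Affine.Point.some _ _ h =
      WeierstrassCurve.Affine.Point.some _ _
        (WeierstrassCurve.Affine.nonsingular_add h h fun hxy => negY_ne hy hxy.2) :=
  WeierstrassCurve.Affine.Point.add_self_of_Y_ne (negY_ne hy)

lemma two_torsion {x : ℚ} (h : (congruentCurve n).Nonsingular x 0) :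
    WeierstrassCurve.Affine.Point.some _ _ h + WeierstrassCurve.Affine.Point.some _ _ h = 0 :=
  WeierstrassCurve.Affine.Point.add_self_of_Y_eq (by rw [negY_eq]; ring)

lemma y0_cases {x : ℚ} (h : (congruentCurve n).Equation x 0) :
    x = 0 ∨ x = (n:ℚ) ∨ x = -(n:ℚ) := by
  have h0 : x * (x - (n:ℚ)) * (x + (n:ℚ)) = 0 := by
    have := (eqn_iff x 0).mp h
    linear_combination -this
  rcases mul_eq_zero.mp h0 with h1 | h1
  · rcases mul_eq_zero.mp h1 with h2 | h2
    · exact Or.inl h2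
    · exact Or.inr (Or.inl (by linarith))
  · exact Or.inr (Or.inr (by linarith))

lemma val_double (hn : n ≠ 0) {x y : ℚ} (hE : y^2 = x^3 - (n:ℚ)^2 * x) (hy : y ≠ 0)
    (hvx : padicValRat 2 x < 0) :
    padicValRat 2 ((congruentCurve n).addX x x ((congruentCurve n).slope x x y y)) =
      padicValRat 2 x - 2 := by
  haveI : Fact (Nat.Prime 2) := ⟨Nat.prime_two⟩
  have hN : (n:ℚ) ≠ 0 := Nat.cast_ne_zero.mpr hn
  have hx : x ≠ 0 := by
    intro h0; rw [h0, padicValRat.zero] at hvx; omega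
  have hvN : 0 ≤ padicValRat 2 (n:ℚ) := by rw [padicValRat.of_nat]; positivity
  have hx3 : x^3 ≠ 0 := pow_ne_zero 3 hx
  have hN2x : -((n:ℚ)^2 * x) ≠ 0 := by
    simp only [neg_ne_zero]; exact mul_ne_zero (pow_ne_zero 2 hN) hx
  have hy2 : y^2 ≠ 0 := pow_ne_zero 2 hy
  have hsum : x^3 + -((n:ℚ)^2 * x) ≠ 0 := by
    intro h0; apply hy2; rw [hE]; linarith
  have hvx3 : padicValRat 2 (x^3) = 3 * padicValRat 2 x := padicValRat.pow x
  have hvN2x : padicValRat 2 (-((n:ℚ)^2 * x)) =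
      2 * padicValRat 2 (n:ℚ) + padicValRat 2 x := by
    rw [padicValRat.neg, padicValRat.mul (pow_ne_zero 2 hN) hx, padicValRat.pow (n:ℚ)]
    push_cast; ring
  have hlt : padicValRat 2 (x^3) < padicValRat 2 (-((n:ℚ)^2 * x)) := by
    rw [hvx3, hvN2x]; omega
  have hvsum : padicValRat 2 (x^3 + -((n:ℚ)^2 * x)) = 3 * padicValRat 2 x := by
    rw [padicValRat.add_eq_of_lt hsum hx3 hN2x hlt, hvx3]
  have hvy : 2 * padicValRat 2 y = 3 * padicValRat 2 x := by
    have h1 : padicValRat 2 (y^2) = 2 * padicValRat 2 y := padicValRat.pow y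
    have h2 : y^2 = x^3 + -((n:ℚ)^2 * x) := by rw [hE]; ring
    rw [h2, hvsum] at h1
    omega
  -- numerator valuation
  have hnum : x^2 + (n:ℚ)^2 ≠ 0 := by positivity
  have hx2 : x^2 ≠ 0 := pow_ne_zero 2 hx
  have hN2 : (n:ℚ)^2 ≠ 0 := pow_ne_zero 2 hN
  have hltnum : padicValRat 2 (x^2) < padicValRat 2 ((n:ℚ)^2) := by
    rw [padicValRat.pow x, padicValRat.pow (n:ℚ)]; omega
  have hvnum : padicValRat 2 (x^2 + (n:ℚ)^2) = 2 * padicValRat 2 x := by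
    rw [padicValRat.add_eq_of_lt hnum hx2 hN2 hltnum, padicValRat.pow x]
    push_cast; ring
  have h2y : (2:ℚ) * y ≠ 0 := mul_ne_zero two_ne_zero hy
  have hv2y : padicValRat 2 ((2:ℚ)*y) = 1 + padicValRat 2 y := by
    rw [padicValRat.mul two_ne_zero hy]
    congr 1
    have := padicValRat.self (p := 2) (by norm_num)
    exact_mod_cast this
  have hquot : (x^2 + (n:ℚ)^2)/(2*y) ≠ 0 := div_ne_zero hnum h2y
  have hXval : padicValRat 2 (((x^2 + (n:ℚ)^2) / (2*y))^2) =
      2 * (2 * padicValRat 2 x - (1 + padicValRat 2 y)) := by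
    rw [padicValRat.pow ((x^2 + (n:ℚ)^2)/(2*y)), padicValRat.div hnum h2y, hvnum, hv2y]
    push_cast; ring
  rw [doubleX_eq hE hy, hXval]
  omega

lemma y_eq_zero_of_add_self_eq_zero {x y : ℚ} {h : (congruentCurve n).Nonsingular x y}
    (h0 : WeierstrassCurve.Affine.Point.some _ _ h + WeierstrassCurve.Affine.Point.some _ _ h = 0) :
    y = 0 := by
  by_contra hy
  rw [double_some h hy] at h0
  exact WeierstrassCurve.Affine.Point.some_ne_zero _ h0

set_option maxHeartbeats 1000000 in
lemma no_order_four (hn : n ≠ 0) (P : (congruentCurve n).Point) (hP : addOrderOf P = 4) :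
    False := by
  have hN : (n:ℚ) ≠ 0 := Nat.cast_ne_zero.mpr hn
  have hP0 : P ≠ 0 := by
    intro h0; rw [h0, addOrderOf_zero] at hP; omega
  cases P with
  | zero => exact absurd rfl hP0
  | @some x y h =>
  have hy : y ≠ 0 := by
    intro h0
    subst h0
    have h2 : (2:ℕ) • WeierstrassCurve.Affine.Point.some _ _ h = 0 := by
      rw [two_nsmul]; exact two_torsion h
    have := addOrderOf_dvd_of_nsmul_eq_zero h2
    rw [hP] at this
    omega
  have hE : y^2 = x^3 - (n:ℚ)^2*x := (eqn_iff x y).mp ((((congruentCurve n).nonsingular_iff x y).mp h)).1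
  set Q := WeierstrassCurve.Affine.Point.some _ _ h with hQ
  have h4 : (4:ℕ) • Q = 0 := by
    have := addOrderOf_nsmul_eq_zero Q
    rwa [hP] at this
  have hRR : (Q + Q) + (Q + Q) = 0 := by
    calc (Q + Q) + (Q + Q) = (2:ℕ) • ((2:ℕ) • Q) := by rw [two_nsmul, two_nsmul]
    _ = (4:ℕ) • Q := by rw [← mul_nsmul]
    _ = 0 := h4
  rw [double_some h hy] at hRR
  have hy2 := y_eq_zero_of_add_self_eq_zero hRR
  set X' := (congruentCurve n).addX x x ((congruentCurve n).slope x x y y) with hX'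
  have hNS : (congruentCurve n).Nonsingular X'
      ((congruentCurve n).addY x x y ((congruentCurve n).slope x x y y)) :=
    WeierstrassCurve.Affine.nonsingular_add h h fun hxy => negY_ne hy hxy.2
  have hEX : (congruentCurve n).Equation X' 0 := by
    have := (((congruentCurve n).nonsingular_iff _ _).mp hNS).1
    rwa [hy2] at this
  have h2yne : (2*y) ≠ 0 := mul_ne_zero two_ne_zero hy
  rcases y0_cases hEX with h0 | h0 | h0
  · have := doubleX_eq hE hy
    rw [← hX', h0] at this
    have hzero : x^2 + (n:ℚ)^2 = 0 := by
      have h' := this.symm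
      have h'' := pow_eq_zero_iff (n := 2) (by norm_num) |>.mp h'
      exact div_eq_zero_iff.mp h'' |>.resolve_right h2yne
    have hpos : (0:ℚ) < (n:ℚ)^2 := by positivity
    nlinarith [sq_nonneg x]
  · have := doubleX_sub hn hE hy
    rw [← hX', h0, sub_self] at this
    have hzero : x^2 - 2*(n:ℚ)*x - (n:ℚ)^2 = 0 := by
      have h' := this.symm
      have := pow_eq_zero_iff (n := 2) (by norm_num) |>.mp h'
      exact div_eq_zero_iff.mp this |>.resolve_right h2yne
    apply no_rat_sq Nat.prime_two ((x - (n:ℚ))/(n:ℚ))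
    have : ((x - (n:ℚ))/(n:ℚ))^2 = 2 := by
      field_simp
      linear_combination hzero
    rw [this]; norm_num
  · have := doubleX_add hn hE hy
    rw [← hX', h0, neg_add_cancel] at this
    have hzero : x^2 + 2*(n:ℚ)*x - (n:ℚ)^2 = 0 := by
      have h' := this.symm
      have := pow_eq_zero_iff (n := 2) (by norm_num) |>.mp h'
      exact div_eq_zero_iff.mp this |>.resolve_right h2yne
    apply no_rat_sq Nat.prime_two ((x + (n:ℚ))/(n:ℚ))
    have : ((x + (n:ℚ))/(n:ℚ))^2 = 2 := by
      field_simp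
      linear_combination hzero
    rw [this]; norm_num

lemma no_order_odd (hn : n ≠ 0) (hsf : Squarefree n) {q : ℕ} (hq : q.Prime) (hq2 : q ≠ 2)
    (Q : (congruentCurve n).Point) (hQ : addOrderOf Q = q) : False := by
  haveI : Fact (Nat.Prime q) := ⟨hq⟩
  have hN : (n:ℚ) ≠ 0 := Nat.cast_ne_zero.mpr hn
  have hQq : (q:ℕ) • Q = 0 := by
    have := addOrderOf_nsmul_eq_zero Q
    rwa [hQ] at this
  set φ : ZMod q →+ (congruentCurve n).Point :=
    ZMod.lift q ⟨zmultiplesHom _ Q, by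
      simp only [zmultiplesHom_apply, natCast_zsmul]
      exact hQq⟩ with hφ
  have hφint : ∀ k : ℤ, φ ((k : ZMod q)) = k • Q := fun k => ZMod.lift_coe q _ k
  have hker : ∀ a : ZMod q, φ a = 0 → a = 0 := by
    intro a ha
    have hrep : ((a.val : ℤ) : ZMod q) = a := by
      push_cast
      exact a.natCast_zmod_val
    have : (a.val : ℕ) • Q = 0 := by
      have := hφint (a.val : ℤ)
      rw [hrep, ha] at this
      rw [← natCast_zsmul]
      exact this.symm
    have hdvd : q ∣ a.val := by
      have h' := addOrderOf_dvd_of_nsmul_eq_zero this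
      rwa [hQ] at h'
    have := a.val_lt
    have : a.val = 0 := Nat.eq_zero_of_dvd_of_lt hdvd this
    rw [← a.natCast_zmod_val, this]
    simp
  have h2ne : (2 : ZMod q) ≠ 0 := by
    intro h2
    have : ((2:ℕ) : ZMod q) = 0 := by exact_mod_cast h2
    have := (ZMod.natCast_eq_zero_iff 2 q).mp this
    exact hq2 ((Nat.prime_dvd_prime_iff_eq hq Nat.prime_two).mp this)
  have hφ2 : ∀ a : ZMod q, φ (2*a) = φ a + φ a := by
    intro a; rw [two_mul, map_add]
  have hsome : ∀ a : ZMod q, a ≠ 0 →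
      ∃ (x y : ℚ) (h : (congruentCurve n).Nonsingular x y),
        φ a = WeierstrassCurve.Affine.Point.some _ _ h ∧ y ≠ 0 := by
    intro a ha
    cases hPa : φ a with
    | zero => exact absurd (hker a hPa) ha
    | @some x y h =>
      refine ⟨x, y, h, rfl, ?_⟩
      intro hy0
      subst hy0
      have h20 : φ (2*a) = 0 := by
        rw [hφ2, hPa]
        exact two_torsion h
      exact mul_ne_zero h2ne ha (hker _ h20)
  -- the double of a nonzero point: x-coordinate facts
  have hdouble : ∀ a : ZMod q, a ≠ 0 →
      ∀ (x y : ℚ) (h : (congruentCurve n).Nonsingular x y),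
        φ a = WeierstrassCurve.Affine.Point.some _ _ h → y ≠ 0 →
        ptx (φ (2*a)) = (congruentCurve n).addX x x ((congruentCurve n).slope x x y y) := by
    intro a ha x y h hfa hy
    rw [hφ2, hfa, double_some h hy, ptx_some]
  have hxval : ∀ a : ZMod q, a ≠ 0 → padicValRat 2 (ptx (φ a)) < 0 := by
    intro a ha
    set b := (2 : ZMod q)⁻¹ * a with hbdef
    have hb : 2 * b = a := by
      rw [hbdef, ← mul_assoc, mul_inv_cancel₀ h2ne, one_mul]
    have hbne : b ≠ 0 := by
      intro h0; rw [hbdef] at h0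
      rcases mul_eq_zero.mp h0 with h | h
      · exact inv_ne_zero h2ne h
      · exact ha h
    obtain ⟨xb, yb, hb', hfb, hyb⟩ := hsome b hbne
    have hEb : yb^2 = xb^3 - (n:ℚ)^2*xb :=
      (eqn_iff xb yb).mp (((congruentCurve n).nonsingular_iff xb yb).mp hb').1
    set X' := (congruentCurve n).addX xb xb ((congruentCurve n).slope xb xb yb yb) with hX'
    have hpa : ptx (φ a) = X' := by
      rw [← hb]; exact hdouble b hbne xb yb hb' hfb hyb
    -- y-coordinate of φ a is nonzero
    set yA := (congruentCurve n).addY xb xb yb ((congruentCurve n).slope xb xb yb yb) with hyA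
    have hfa2 : φ a = WeierstrassCurve.Affine.Point.some _ _
        (WeierstrassCurve.Affine.nonsingular_add hb' hb' fun hxy => negY_ne hyb hxy.2) := by
      rw [← hb, hφ2, hfb, double_some hb' hyb]
    obtain ⟨xa, ya, ha', hfa, hya⟩ := hsome a ha
    have hEa : ya^2 = xa^3 - (n:ℚ)^2*xa :=
      (eqn_iff xa ya).mp (((congruentCurve n).nonsingular_iff xa ya).mp ha').1
    have hxa : xa = X' := by
      have : ptx (φ a) = xa := by rw [hfa, ptx_some]
      rw [hpa] at this; exact this.symm
    -- xa, xa - n, xa + n are all nonzero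
    have hya2 : ya^2 ≠ 0 := pow_ne_zero 2 hya
    have hX0 : X' ≠ 0 := by
      intro h0; rw [← hxa] at h0; apply hya2
      rw [hEa, h0]; ring
    have hXn : X' - (n:ℚ) ≠ 0 := by
      intro h0
      have : X' = (n:ℚ) := by linarith [sub_eq_zero.mp h0]
      rw [← hxa] at this; apply hya2
      rw [hEa, this]; ring
    have hXn' : X' + (n:ℚ) ≠ 0 := by
      intro h0
      have : X' = -(n:ℚ) := by linarith
      rw [← hxa] at this; apply hya2
      rw [hEa, this]; ring
    -- squares
    set u := (xb^2 + (n:ℚ)^2)/(2*yb) with hu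
    set v := (xb^2 - 2*(n:ℚ)*xb - (n:ℚ)^2)/(2*yb) with hv
    set w := (xb^2 + 2*(n:ℚ)*xb - (n:ℚ)^2)/(2*yb) with hw
    have hu2 : u^2 = X' := (doubleX_eq hEb hyb).symm
    have hv2 : v^2 = X' - (n:ℚ) := by
      have := doubleX_sub hn hEb hyb; rw [← hX'] at this; exact this.symm
    have hw2 : w^2 = X' + (n:ℚ) := by
      have := doubleX_add hn hEb hyb; rw [← hX'] at this; exact this.symm
    have hune : u ≠ 0 := by intro h0; apply hX0; rw [← hu2, h0]; ring
    have hvne : v ≠ 0 := by intro h0; apply hXn; rw [← hv2, h0]; ring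
    have hwne : w ≠ 0 := by intro h0; apply hXn'; rw [← hw2, h0]; ring
    have := cong_lemma n hsf u v w hune hvne hwne
      (by rw [hu2, hv2]; ring) (by rw [hw2, hu2]; ring)
    rw [hu2] at this
    rwa [hpa]
  -- minimality contradiction
  have h1ne : (1 : ZMod q) ≠ 0 := one_ne_zero
  obtain ⟨a₀, ha₀T, hmin⟩ := Finset.exists_min_image (Finset.univ.erase (0 : ZMod q))
    (fun a => padicValRat 2 (ptx (φ a))) ⟨1, Finset.mem_erase.mpr ⟨h1ne, Finset.mem_univ _⟩⟩
  have ha₀ : a₀ ≠ 0 := (Finset.mem_erase.mp ha₀T).1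
  have h2a₀ : 2 * a₀ ≠ 0 := mul_ne_zero h2ne ha₀
  obtain ⟨x₀, y₀, h₀, hf₀, hy₀⟩ := hsome a₀ ha₀
  have hE₀ : y₀^2 = x₀^3 - (n:ℚ)^2*x₀ :=
    (eqn_iff x₀ y₀).mp (((congruentCurve n).nonsingular_iff x₀ y₀).mp h₀).1
  have hv₀ : padicValRat 2 x₀ < 0 := by
    have := hxval a₀ ha₀
    rwa [hf₀, ptx_some] at this
  have hvd : padicValRat 2 (ptx (φ (2*a₀))) = padicValRat 2 x₀ - 2 := by
    rw [hdouble a₀ ha₀ x₀ y₀ h₀ hf₀ hy₀]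
    exact val_double hn hE₀ hy₀ hv₀
  have hge := hmin (2*a₀) (Finset.mem_erase.mpr ⟨h2a₀, Finset.mem_univ _⟩)
  have hx₀eq : padicValRat 2 (ptx (φ a₀)) = padicValRat 2 x₀ := by rw [hf₀, ptx_some]
  rw [hvd, hx₀eq] at hge
  omega

lemma nat_decomp (m : ℕ) (hm : m ≠ 0) (h2 : ¬ m ∣ 2) :
    (∃ p, p.Prime ∧ p ≠ 2 ∧ p ∣ m) ∨ 4 ∣ m := by
  by_cases hodd : ∃ p, p.Prime ∧ p ≠ 2 ∧ p ∣ m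
  · exact Or.inl hodd
  · push_neg at hodd
    right
    have hm1 : m ≠ 1 := fun h => h2 (h ▸ one_dvd 2)
    have hp1 : (m.minFac).Prime := Nat.minFac_prime hm1
    have h2m : 2 ∣ m := by
      have := hodd m.minFac hp1
      rcases eq_or_ne m.minFac 2 with h | h
      · exact h ▸ m.minFac_dvd
      · exact absurd (m.minFac_dvd) (this h)
    obtain ⟨t, ht⟩ := h2m
    have ht0 : t ≠ 0 := by rintro rfl; simp at ht; exact hm ht
    have ht1 : t ≠ 1 := by rintro rfl; rw [mul_one] at ht; subst ht; exact h2 (dvd_refl 2)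
    have hpt : (t.minFac).Prime := Nat.minFac_prime ht1
    have h2t : 2 ∣ t := by
      have hd : t.minFac ∣ m := ht ▸ (t.minFac_dvd).mul_left 2
      have := hodd t.minFac hpt
      rcases eq_or_ne t.minFac 2 with h | h
      · exact h ▸ t.minFac_dvd
      · exact absurd hd (this h)
    obtain ⟨s, hs⟩ := h2t
    exact ⟨s, by rw [ht, hs]; ring⟩

lemma add_self_eq_zero_of_torsion (hn : n ≠ 0) (hsf : Squarefree n)
    (P : (congruentCurve n).Point) (hP : IsOfFinAddOrder P) : P + P = 0 := by
  by_contra hne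
  set m := addOrderOf P with hm
  have hm0 : m ≠ 0 := hP.addOrderOf_pos.ne'
  have h2 : ¬ m ∣ 2 := by
    intro hd
    apply hne
    rw [← two_nsmul]
    exact addOrderOf_dvd_iff_nsmul_eq_zero.mp hd
  rcases nat_decomp m hm0 h2 with ⟨p, hp, hp2, hpd⟩ | h4
  · have hdiv : m / p ≠ 0 := by
      have h1 := Nat.le_of_dvd (Nat.pos_of_ne_zero hm0) hpd
      have h2' := Nat.div_pos h1 hp.pos
      omega
    have hord : addOrderOf ((m / p) • P) = p := by
      rw [addOrderOf_nsmul_of_dvd hdiv (Nat.div_dvd_of_dvd hpd)]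
      exact Nat.div_div_self hpd hm0
    exact no_order_odd hn hsf hp hp2 _ hord
  · have hdiv : m / 4 ≠ 0 := by
      have h1 := Nat.le_of_dvd (Nat.pos_of_ne_zero hm0) h4
      have h2' := Nat.div_pos h1 (by norm_num : 0 < 4)
      omega
    have hord : addOrderOf ((m / 4) • P) = 4 := by
      rw [addOrderOf_nsmul_of_dvd hdiv (Nat.div_dvd_of_dvd h4)]
      exact Nat.div_div_self h4 hm0
    exact no_order_four hn _ hord

lemma some_eq_some {W : WeierstrassCurve.Affine ℚ} {x₁ y₁ x₂ y₂ : ℚ}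
    (h₁ : W.Nonsingular x₁ y₁) (h₂ : W.Nonsingular x₂ y₂) (hx : x₁ = x₂) (hy : y₁ = y₂) :
    WeierstrassCurve.Affine.Point.some _ _ h₁ = WeierstrassCurve.Affine.Point.some _ _ h₂ := by
  subst hx; subst hy; rfl

end CongrAux

open CongrAux in
/-- For squarefree positive `n`, the torsion subgroup of `E_n(ℚ)` for
`E_n : y² = x³ − n²x` consists exactly of the point at infinity `0` and the three
two-torsion points `(0, 0)`, `(n, 0)` and `(−n, 0)`, and is isomorphic to
`ℤ/2ℤ ⊕ ℤ/2ℤ`. -/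
theorem torsion_congruent_curve (n : ℕ) (hn : 0 < n) (hsf : Squarefree n) :
    (∀ P : (congruentCurve n).Point,
      P ∈ AddCommGroup.torsion (congruentCurve n).Point ↔
        (P = 0 ∨ ∃ (x : ℚ) (h : (congruentCurve n).Nonsingular x 0),
          P = WeierstrassCurve.Affine.Point.some _ _ h ∧ (x = 0 ∨ x = n ∨ x = -(n : ℚ)))) ∧
    Nonempty ((AddCommGroup.torsion (congruentCurve n).Point) ≃+ (ZMod 2 × ZMod 2)) := by
  have hn0 : n ≠ 0 := hn.ne'
  have hN : (n:ℚ) ≠ 0 := Nat.cast_ne_zero.mpr hn0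
  have hA : (congruentCurve n).Nonsingular 0 0 :=
    ns_of_eqn hn0 ((eqn_iff 0 0).mpr (by ring))
  have hB : (congruentCurve n).Nonsingular (n:ℚ) 0 :=
    ns_of_eqn hn0 ((eqn_iff _ 0).mpr (by ring))
  have hC : (congruentCurve n).Nonsingular (-(n:ℚ)) 0 :=
    ns_of_eqn hn0 ((eqn_iff _ 0).mpr (by ring))
  have hmain : ∀ P : (congruentCurve n).Point,
      P ∈ AddCommGroup.torsion (congruentCurve n).Point ↔
        (P = 0 ∨ ∃ (x : ℚ) (h : (congruentCurve n).Nonsingular x 0),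
          P = WeierstrassCurve.Affine.Point.some _ _ h ∧ (x = 0 ∨ x = n ∨ x = -(n : ℚ))) := by
    intro P
    constructor
    · intro hPt
      have hfin : IsOfFinAddOrder P := (AddCommGroup.mem_torsion _).mp hPt
      have h2 := add_self_eq_zero_of_torsion hn0 hsf P hfin
      cases P with
      | zero => exact Or.inl rfl
      | @some x y h =>
        have hy0 : y = 0 := y_eq_zero_of_add_self_eq_zero h2
        subst hy0
        exact Or.inr ⟨x, h, rfl,
          y0_cases (((congruentCurve n).nonsingular_iff x 0).mp h).1⟩
    · rintro (rfl | ⟨x, h, rfl, hx⟩)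
      · exact AddSubgroup.zero_mem _
      · rw [AddCommGroup.mem_torsion]
        rw [isOfFinAddOrder_iff_nsmul_eq_zero]
        exact ⟨2, two_pos, by rw [two_nsmul]; exact two_torsion h⟩
  refine ⟨hmain, ?_⟩
  set T := AddCommGroup.torsion (congruentCurve n).Point with hT
  have memA : WeierstrassCurve.Affine.Point.some _ _ hA ∈ T :=
    (hmain _).mpr (Or.inr ⟨0, hA, rfl, Or.inl rfl⟩)
  have memB : WeierstrassCurve.Affine.Point.some _ _ hB ∈ T :=
    (hmain _).mpr (Or.inr ⟨(n:ℚ), hB, rfl, Or.inr (Or.inl rfl)⟩)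
  have memC : WeierstrassCurve.Affine.Point.some _ _ hC ∈ T :=
    (hmain _).mpr (Or.inr ⟨-(n:ℚ), hC, rfl, Or.inr (Or.inr rfl)⟩)
  set a : T := ⟨_, memA⟩ with ha
  set b : T := ⟨_, memB⟩ with hb
  have haa : a + a = 0 := Subtype.ext (by exact two_torsion hA)
  have hbb : b + b = 0 := Subtype.ext (by exact two_torsion hB)
  -- A + B = C
  have hABC : WeierstrassCurve.Affine.Point.some _ _ hA + WeierstrassCurve.Affine.Point.some _ _ hB =
      WeierstrassCurve.Affine.Point.some _ _ hC := by
    have hne : (0:ℚ) ≠ (n:ℚ) := fun h => hN h.symm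
    rw [WeierstrassCurve.Affine.Point.add_of_X_ne hne]
    apply some_eq_some
    · rw [WeierstrassCurve.Affine.slope_of_X_ne hne]
      simp [congruentCurve, WeierstrassCurve.Affine.addX]
    · rw [WeierstrassCurve.Affine.slope_of_X_ne hne]
      simp [congruentCurve, WeierstrassCurve.Affine.addY,
        WeierstrassCurve.Affine.negAddY, WeierstrassCurve.Affine.negY,
        WeierstrassCurve.Affine.addX]
  have hab : a + b = ⟨_, memC⟩ := Subtype.ext (by exact hABC)
  -- build the hom
  set gA : ZMod 2 →+ T := ZMod.lift 2 ⟨zmultiplesHom T a, by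
    simp only [zmultiplesHom_apply]
    rw [show ((2:ℕ):ℤ) = (2:ℤ) by norm_num, two_zsmul]
    exact haa⟩ with hgA
  set gB : ZMod 2 →+ T := ZMod.lift 2 ⟨zmultiplesHom T b, by
    simp only [zmultiplesHom_apply]
    rw [show ((2:ℕ):ℤ) = (2:ℤ) by norm_num, two_zsmul]
    exact hbb⟩ with hgB
  set F : ZMod 2 × ZMod 2 →+ T := gA.coprod gB with hF
  have hgA1 : gA 1 = a := by
    have : ((1:ℤ) : ZMod 2) = 1 := by norm_num
    rw [hgA, ← this, ZMod.lift_coe]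
    simp
  have hgB1 : gB 1 = b := by
    have : ((1:ℤ) : ZMod 2) = 1 := by norm_num
    rw [hgB, ← this, ZMod.lift_coe]
    simp
  have hF10 : F (1, 0) = a := by rw [hF, AddMonoidHom.coprod_apply]; simp [hgA1]
  have hF01 : F (0, 1) = b := by rw [hF, AddMonoidHom.coprod_apply]; simp [hgB1]
  have hF11 : F (1, 1) = a + b := by
    rw [hF, AddMonoidHom.coprod_apply]; simp [hgA1, hgB1]
  have hz2 : ∀ z : ZMod 2, z = 0 ∨ z = 1 := by decide
  have hinj : Function.Injective F := by
    rw [injective_iff_map_eq_zero]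
    rintro ⟨s, t⟩ hst
    rcases hz2 s with rfl | rfl <;> rcases hz2 t with rfl | rfl
    · rfl
    · rw [hF01] at hst
      exact absurd (congrArg Subtype.val hst)
        (WeierstrassCurve.Affine.Point.some_ne_zero hB)
    · rw [hF10] at hst
      exact absurd (congrArg Subtype.val hst)
        (WeierstrassCurve.Affine.Point.some_ne_zero hA)
    · rw [hF11, hab] at hst
      exact absurd (congrArg Subtype.val hst)
        (WeierstrassCurve.Affine.Point.some_ne_zero hC)
  have hsurj : Function.Surjective F := by
    rintro ⟨P, hP⟩
    rcases (hmain P).mp hP with rfl | ⟨x, h, rfl, hx⟩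
    · exact ⟨0, map_zero F⟩
    · rcases hx with rfl | rfl | rfl
      · exact ⟨(1, 0), by rw [hF10]⟩
      · exact ⟨(0, 1), by rw [hF01]⟩
      · exact ⟨(1, 1), by rw [hF11, hab]⟩
  exact ⟨(AddEquiv.ofBijective F ⟨hinj, hsurj⟩).symm⟩
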